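/- Let n = p+q and let σ ∈ S_p × S_q ⊂ S_n. Then in the polynomial ring ℂ[x_1,...,x_n, Y_1,...,Y_n], the substitution of x_i ↦ Y_{σ(w(i))} into P(x) = (-1)^{l_p(w)} ∏_{i ≤ p < j} (x_{w^{-1}(i)} - Y_j) equals (-1)^{l_p(w)} ∏_{i ≤ p < j} (Y_i - Y_j). Moreover, if w' ∈ S_n satisfies w'w^{-1} ∉ S_p × S_q, then substituting x_i ↦ Y_{w'(i)} into P(x) gives 0. -/

import Mathlib

open Finset MvPolynomial

/-- `l_p(w) = #{(i,j) : i < j, w(j) ≤ p < w(i)}`. -/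
def lpInv (p : ℕ) {n : ℕ} (w : Equiv.Perm (Fin n)) : ℕ :=
  (Finset.univ.filter fun ij : Fin n × Fin n =>
    ij.1 < ij.2 ∧ (w ij.2).val < p ∧ p ≤ (w ij.1).val).card

/-- substituting `x_i ↦ Y_{σ(w(i))}` for `σ ∈ S_p × S_q` into
`P(x) = (-1)^{l_p(w)} ∏_{i ≤ p < j} (x_{w⁻¹(i)} - Y_j)` gives
`(-1)^{l_p(w)} ∏_{i ≤ p < j} (Y_i - Y_j)`, while substituting `x_i ↦ Y_{w'(i)}`
for `w'` with `w'w⁻¹ ∉ S_p × S_q` gives `0`. -/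
theorem closed_orbit_formula_typeA (p q : ℕ) (w : Equiv.Perm (Fin (p + q))) :
    (∀ σ : Equiv.Perm (Fin (p + q)), (∀ a, a.val < p ↔ (σ a).val < p) →
      (-1 : MvPolynomial (Fin (p + q)) ℂ) ^ lpInv p w *
        ∏ i ∈ Finset.univ.filter (fun i : Fin (p + q) => i.val < p),
          ∏ j ∈ Finset.univ.filter (fun j : Fin (p + q) => p ≤ j.val),
            (X (σ (w (w⁻¹ i))) - X j)
      = (-1 : MvPolynomial (Fin (p + q)) ℂ) ^ lpInv p w *
        ∏ i ∈ Finset.univ.filter (fun i : Fin (p + q) => i.val < p),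
          ∏ j ∈ Finset.univ.filter (fun j : Fin (p + q) => p ≤ j.val),
            (X i - X j)) ∧
    (∀ w' : Equiv.Perm (Fin (p + q)),
      ¬ (∀ a, a.val < p ↔ ((w' * w⁻¹) a).val < p) →
      (-1 : MvPolynomial (Fin (p + q)) ℂ) ^ lpInv p w *
        ∏ i ∈ Finset.univ.filter (fun i : Fin (p + q) => i.val < p),
          ∏ j ∈ Finset.univ.filter (fun j : Fin (p + q) => p ≤ j.val),
            (X (w' (w⁻¹ i)) - X j) = 0) := by
  constructor
  · intro σ hσ
    congr 1
    simp only [Equiv.apply_symm_apply, Equiv.Perm.coe_inv]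
    refine Finset.prod_nbij' (fun i => σ i) (fun i => σ⁻¹ i) ?_ ?_ ?_ ?_ ?_
    · intro a ha
      simp only [mem_filter, mem_univ, true_and] at ha ⊢
      exact (hσ a).mp ha
    · intro a ha
      simp only [mem_filter, mem_univ, true_and] at ha ⊢
      have := hσ (σ⁻¹ a)
      simpa using this.mpr (by simpa using ha)
    · intro a _; simp
    · intro a _; simp
    · intro a _; rfl
  · intro w' hw'
    push_neg at hw'
    obtain ⟨a, ha⟩ := hw'
    -- find i with i.val < p and p ≤ ((w' * w⁻¹) i).val
    have key : ∃ i : Fin (p + q), i.val < p ∧ p ≤ ((w' * w⁻¹) i).val := by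
      by_contra h
      push_neg at h
      -- then w'*w⁻¹ maps {<p} into {<p}, injectively, so bijectively
      set f := w' * w⁻¹ with hf
      have hmap : ∀ i : Fin (p + q), i.val < p → (f i).val < p := by
        intro i hi
        by_contra hc
        exact absurd (h i hi) (by omega)
      have himg : (Finset.univ.filter fun i : Fin (p + q) => i.val < p).image f
          = Finset.univ.filter fun i : Fin (p + q) => i.val < p := by
        apply Finset.eq_of_subset_of_card_le
        · intro x hx
          simp only [mem_image, mem_filter, mem_univ, true_and] at hx ⊢
          obtain ⟨i, hi, rfl⟩ := hx
          exact hmap i hi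
        · rw [Finset.card_image_of_injective _ f.injective]
      have hiff : ∀ i : Fin (p + q), i.val < p ↔ (f i).val < p := by
        intro i
        constructor
        · exact hmap i
        · intro hfi
          by_contra hi
          have : f i ∈ (Finset.univ.filter fun i : Fin (p + q) => i.val < p).image f := by
            rw [himg]; simp [hfi]
          simp only [mem_image, mem_filter, mem_univ, true_and] at this
          obtain ⟨j, hj, hji⟩ := this
          have := f.injective hji
          omega
      rcases ha with ⟨h1, h2⟩ | ⟨h1, h2⟩
      · exact absurd (hmap a h1) (by omega)
      · have := (hiff a).mpr h2
        omega
    obtain ⟨i, hi, hfi⟩ := key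
    apply mul_eq_zero_of_right
    apply Finset.prod_eq_zero (i := i) (by simp [hi])
    apply Finset.prod_eq_zero (i := (w' * w⁻¹) i) (by simpa using hfi)
    simp [Equiv.Perm.mul_apply]
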